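/- Let R be a commutative ring, u, v ∈ R, and l ≥ 2. Let A be an l × (l−2) matrix over R and let α, β, γ, δ ∈ R^l be column vectors. Define three square matrices: M₊ is the (l+2) × (l+2) matrix with first row (1, −1, −u, u, 0, …, 0), second row (0, v, 0, −1, 0, …, 0), and (i+2)-nd row (α_i, β_i, γ_i, δ_i, A_{i,1}, …, A_{i,l−2}); M₋ is the (l+2) × (l+2) matrix with first row (1, −1, −u, u, 0, …, 0), second row (v, 0, −1, 0, 0, …, 0), and the same remaining rows as M₊; M₀ is the l × l matrix whose first two columns are α + β and γ + δ and whose remaining columns are the columns of A. Then det M₊ − det M₋ = (uv − 1) · det M₀. (This is the skein relation for the Alexander polynomial Δ₀ of labeled virtual link diagrams L₊, L₋, L₀ differing at one crossing.) -/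

import Mathlib

set_option maxHeartbeats 1600000 in
/-- The skein relation for the Alexander polynomial `Δ₀` of labeled virtual link
diagrams `L₊`, `L₋`, `L₀` differing at one crossing:
`det M₊ − det M₋ = (uv − 1) · det M₀`. -/
theorem skein_relation_det {R : Type*} [CommRing R] (u v : R) (l : ℕ) (hl : 2 ≤ l)
    (A : Matrix (Fin l) (Fin (l - 2)) R) (α β γ δ : Fin l → R)
    (Mp Mm : Matrix (Fin (l + 2)) (Fin (l + 2)) R)
    (M₀ : Matrix (Fin l) (Fin l) R)
    (hMp : Mp = Matrix.of fun (i j : Fin (l + 2)) =>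
      if (i : ℕ) = 0 then
        (if (j : ℕ) = 0 then 1 else if (j : ℕ) = 1 then -1
         else if (j : ℕ) = 2 then -u else if (j : ℕ) = 3 then u else 0)
      else if (i : ℕ) = 1 then
        (if (j : ℕ) = 1 then v else if (j : ℕ) = 3 then -1 else 0)
      else
        (if h0 : (j : ℕ) = 0 then α ⟨(i : ℕ) - 2, by omega⟩
         else if h1 : (j : ℕ) = 1 then β ⟨(i : ℕ) - 2, by omega⟩
         else if h2 : (j : ℕ) = 2 then γ ⟨(i : ℕ) - 2, by omega⟩
         else if h3 : (j : ℕ) = 3 then δ ⟨(i : ℕ) - 2, by omega⟩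
         else A ⟨(i : ℕ) - 2, by omega⟩ ⟨(j : ℕ) - 4, by omega⟩))
    (hMm : Mm = Matrix.of fun (i j : Fin (l + 2)) =>
      if (i : ℕ) = 0 then
        (if (j : ℕ) = 0 then 1 else if (j : ℕ) = 1 then -1
         else if (j : ℕ) = 2 then -u else if (j : ℕ) = 3 then u else 0)
      else if (i : ℕ) = 1 then
        (if (j : ℕ) = 0 then v else if (j : ℕ) = 2 then -1 else 0)
      else
        (if h0 : (j : ℕ) = 0 then α ⟨(i : ℕ) - 2, by omega⟩
         else if h1 : (j : ℕ) = 1 then β ⟨(i : ℕ) - 2, by omega⟩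
         else if h2 : (j : ℕ) = 2 then γ ⟨(i : ℕ) - 2, by omega⟩
         else if h3 : (j : ℕ) = 3 then δ ⟨(i : ℕ) - 2, by omega⟩
         else A ⟨(i : ℕ) - 2, by omega⟩ ⟨(j : ℕ) - 4, by omega⟩))
    (hM₀ : M₀ = Matrix.of fun (i j : Fin l) =>
      if h0 : (j : ℕ) = 0 then α i + β i
      else if h1 : (j : ℕ) = 1 then γ i + δ i
      else A i ⟨(j : ℕ) - 2, by omega⟩) :
    Mp.det - Mm.det = (u * v - 1) * M₀.det := by
  -- Step 1: replace row 1 of `Mp` by `Mp row1 - Mm row1`.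
  obtain ⟨N, hN⟩ : ∃ N : Matrix (Fin (l + 2)) (Fin (l + 2)) R,
      N = Mp.updateRow ⟨1, by omega⟩ (fun j => Mp ⟨1, by omega⟩ j - Mm ⟨1, by omega⟩ j) :=
    ⟨_, rfl⟩
  have hMmrow : Mp.updateRow ⟨1, by omega⟩ (Mm ⟨1, by omega⟩) = Mm := by
    ext i j
    by_cases hi : i = ⟨1, by omega⟩
    · subst hi; rw [Matrix.updateRow_self]
    · rw [Matrix.updateRow_ne hi]
      have hi1 : (i : ℕ) ≠ 1 := fun h => hi (Fin.ext h)
      rw [hMp, hMm]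
      simp only [Matrix.of_apply, hi1, if_false]
  have hdetN : N.det = Mp.det - Mm.det := by
    have hfun : (fun j => Mp ⟨1, by omega⟩ j - Mm ⟨1, by omega⟩ j)
        = Mp ⟨1, by omega⟩ + (-1 : R) • Mm ⟨1, by omega⟩ := by
      funext j; simp [sub_eq_add_neg]
    rw [hN, hfun, Matrix.det_updateRow_add, Matrix.det_updateRow_smul,
      Matrix.updateRow_eq_self, hMmrow]
    ring
  have hNapp : ∀ i j : Fin (l + 2), N i j =
      if (i : ℕ) = 1 then
        (if (j : ℕ) = 0 then -v else if (j : ℕ) = 1 then v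
         else if (j : ℕ) = 2 then 1 else if (j : ℕ) = 3 then -1 else 0)
      else Mp i j := by
    intro i j
    rw [hN]
    by_cases hi : i = ⟨1, by omega⟩
    · subst hi
      rw [Matrix.updateRow_self]
      have hi1 : ((⟨1, by omega⟩ : Fin (l + 2)) : ℕ) = 1 := rfl
      rw [if_pos hi1, hMp, hMm]
      simp only [Matrix.of_apply, hi1]
      norm_num
      split_ifs <;> first | rfl | omega | (exfalso; omega) | (simp only [Fin.ext_iff, Fin.val_zero] at *; omega) | ring
    · have hi1 : (i : ℕ) ≠ 1 := fun h => hi (Fin.ext h)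
      rw [Matrix.updateRow_ne hi, if_neg hi1]
  -- Step 2: add column 0 to column 1.
  obtain ⟨N2, hN2⟩ : ∃ N2 : Matrix (Fin (l + 2)) (Fin (l + 2)) R,
      N2 = N.updateCol ⟨1, by omega⟩ (fun k => N k ⟨1, by omega⟩ + N k ⟨0, by omega⟩) :=
    ⟨_, rfl⟩
  have hdetN2 : N2.det = N.det := by
    rw [hN2]
    exact Matrix.det_updateCol_add_self N (by simp [Fin.ext_iff])
  have hN2app : ∀ i j : Fin (l + 2), N2 i j =
      if (j : ℕ) = 1 then N i ⟨1, by omega⟩ + N i ⟨0, by omega⟩ else N i j := by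
    intro i j
    rw [hN2, Matrix.updateCol_apply]
    by_cases hj : (j : ℕ) = 1
    · rw [if_pos (Fin.ext hj), if_pos hj]
    · rw [if_neg (fun h => hj (by rw [h])), if_neg hj]
  -- Step 3: add column 2 to column 3.
  obtain ⟨N3, hN3⟩ : ∃ N3 : Matrix (Fin (l + 2)) (Fin (l + 2)) R,
      N3 = N2.updateCol ⟨3, by omega⟩ (fun k => N2 k ⟨3, by omega⟩ + N2 k ⟨2, by omega⟩) :=
    ⟨_, rfl⟩
  have hdetN3 : N3.det = N2.det := by
    rw [hN3]
    exact Matrix.det_updateCol_add_self N2 (by simp [Fin.ext_iff])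
  have hN3app : ∀ i j : Fin (l + 2), N3 i j =
      if (j : ℕ) = 3 then N2 i ⟨3, by omega⟩ + N2 i ⟨2, by omega⟩ else N2 i j := by
    intro i j
    rw [hN3, Matrix.updateCol_apply]
    by_cases hj : (j : ℕ) = 3
    · rw [if_pos (Fin.ext hj), if_pos hj]
    · rw [if_neg (fun h => hj (by rw [h])), if_neg hj]
  -- Explicit form of the entries of N3.
  have hEapp : ∀ i j : Fin (l + 2), N3 i j =
      if (i : ℕ) = 0 then
        (if (j : ℕ) = 0 then 1 else if (j : ℕ) = 2 then -u else 0)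
      else if (i : ℕ) = 1 then
        (if (j : ℕ) = 0 then -v else if (j : ℕ) = 2 then 1 else 0)
      else
        (if h0 : (j : ℕ) = 0 then α ⟨(i : ℕ) - 2, by omega⟩
         else if h1 : (j : ℕ) = 1 then β ⟨(i : ℕ) - 2, by omega⟩ + α ⟨(i : ℕ) - 2, by omega⟩
         else if h2 : (j : ℕ) = 2 then γ ⟨(i : ℕ) - 2, by omega⟩
         else if h3 : (j : ℕ) = 3 then δ ⟨(i : ℕ) - 2, by omega⟩ + γ ⟨(i : ℕ) - 2, by omega⟩
         else A ⟨(i : ℕ) - 2, by omega⟩ ⟨(j : ℕ) - 4, by omega⟩) := by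
    intro i j
    simp only [hN3app, hN2app, hNapp, hMp, Matrix.of_apply, Fin.val_mk]
    clear hN3app hN2app hNapp hdetN3 hdetN2 hdetN hN3 hN2 hN hMmrow hMp hMm hM₀
    clear N3 N2 N Mp Mm M₀
    norm_num
    by_cases hi0 : (i : ℕ) = 0 <;> by_cases hi1 : (i : ℕ) = 1 <;>
      by_cases hj0 : (j : ℕ) = 0 <;> by_cases hj1 : (j : ℕ) = 1 <;>
      by_cases hj2 : (j : ℕ) = 2 <;> by_cases hj3 : (j : ℕ) = 3 <;>
      first
        | omega
        | (simp only [Fin.ext_iff, Fin.val_zero, hi0, hi1, hj0, hj1, hj2, hj3] <;> norm_num <;> first | rfl | ring)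
  -- the block identity
  have h2l : 2 + l = l + 2 := by omega
  have hsub : ∀ (k : Fin l) (h : 2 + (k : ℕ) - 2 < l), (⟨2 + (k : ℕ) - 2, h⟩ : Fin l) = k :=
    fun k h => Fin.ext (by show 2 + (k : ℕ) - 2 = (k : ℕ); omega)
  have hkey : Matrix.fromBlocks !![(1 : R), -u; -v, 1] 0
      (Matrix.of fun (i : Fin l) (k : Fin 2) => if (k : ℕ) = 0 then α i else γ i) M₀
      = N3.submatrix (finSumFinEquiv.trans (finCongr h2l))
        (fun x => Equiv.swap (⟨1, by omega⟩ : Fin (l + 2)) ⟨2, by omega⟩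
          ((finSumFinEquiv.trans (finCongr h2l)) x)) := by
    have hel : ∀ k : Fin 2, ((finSumFinEquiv.trans (finCongr h2l)) (Sum.inl k) : ℕ) = (k : ℕ) := by
      intro k; simp
    have her : ∀ k : Fin l,
        ((finSumFinEquiv.trans (finCongr h2l)) (Sum.inr k) : ℕ) = 2 + (k : ℕ) := by
      intro k; simp; omega
    have hsw : ∀ c : Fin (l + 2),
        ((Equiv.swap (⟨1, by omega⟩ : Fin (l + 2)) ⟨2, by omega⟩ c : Fin (l + 2)) : ℕ) =
          if (c : ℕ) = 1 then 2 else if (c : ℕ) = 2 then 1 else (c : ℕ) := by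
      intro c
      by_cases h1 : (c : ℕ) = 1
      · have hc : c = (⟨1, by omega⟩ : Fin (l + 2)) := Fin.ext h1
        rw [hc, Equiv.swap_apply_left]; simp
      · by_cases h2 : (c : ℕ) = 2
        · have hc : c = (⟨2, by omega⟩ : Fin (l + 2)) := Fin.ext h2
          rw [hc, Equiv.swap_apply_right]; simp [h1, h2]
        · rw [Equiv.swap_apply_of_ne_of_ne (fun h => h1 (by rw [h]))
            (fun h => h2 (by rw [h]))]
          simp [h1, h2]
    ext i j
    rw [Matrix.submatrix_apply, hEapp]
    clear hEapp hN3app hN2app hNapp hdetN3 hdetN2 hdetN hN3 hN2 hN hMmrow hMp hMm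
    rcases i with i | i <;> rcases j with j | j
    · -- inl inl : B block
      have hc : ((Equiv.swap (⟨1, by omega⟩ : Fin (l + 2)) ⟨2, by omega⟩
          ((finSumFinEquiv.trans (finCongr h2l)) (Sum.inl j))) : ℕ) =
          if (j : ℕ) = 1 then 2 else if (j : ℕ) = 2 then 1 else (j : ℕ) := by
        rw [hsw, hel]
      rw [Matrix.fromBlocks_apply₁₁]
      simp only [hel, hc]
      fin_cases i <;> fin_cases j <;> norm_num
    · -- inl inr : zero block
      have hc : ((Equiv.swap (⟨1, by omega⟩ : Fin (l + 2)) ⟨2, by omega⟩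
          ((finSumFinEquiv.trans (finCongr h2l)) (Sum.inr j))) : ℕ) =
          if (j : ℕ) = 0 then 1 else if (j : ℕ) = 1 then 3 else 2 + (j : ℕ) := by
        rw [hsw, her]
        split_ifs <;> omega
      rw [Matrix.fromBlocks_apply₁₂, Matrix.zero_apply]
      simp only [hel, hc]
      rcases j with ⟨jv, hjv⟩
      fin_cases i <;> rcases jv with _ | _ | jv <;> norm_num <;> split_ifs <;>
        first | rfl | omega | (exfalso; omega)
    · -- inr inl : C block
      have hc : ((Equiv.swap (⟨1, by omega⟩ : Fin (l + 2)) ⟨2, by omega⟩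
          ((finSumFinEquiv.trans (finCongr h2l)) (Sum.inl j))) : ℕ) =
          if (j : ℕ) = 1 then 2 else if (j : ℕ) = 2 then 1 else (j : ℕ) := by
        rw [hsw, hel]
      rw [Matrix.fromBlocks_apply₂₁, Matrix.of_apply]
      simp only [her, hc, hsub]
      fin_cases j <;> norm_num <;> (try split_ifs) <;>
        first | rfl | ring1 | omega | (exfalso; omega) | (congr 1 <;> first | rfl | (rw [Fin.ext_iff]; simp only [Fin.val_mk]; omega))
    · -- inr inr : M₀ block
      have hc : ((Equiv.swap (⟨1, by omega⟩ : Fin (l + 2)) ⟨2, by omega⟩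
          ((finSumFinEquiv.trans (finCongr h2l)) (Sum.inr j))) : ℕ) =
          if (j : ℕ) = 0 then 1 else if (j : ℕ) = 1 then 3 else 2 + (j : ℕ) := by
        rw [hsw, her]
        split_ifs <;> omega
      rw [Matrix.fromBlocks_apply₂₂, hM₀, Matrix.of_apply]
      simp only [her, hc, hsub]
      rcases j with ⟨jv, hjv⟩
      rcases jv with _ | _ | jv <;> norm_num <;> (try split_ifs) <;>
        first | rfl | ring1 | omega | (exfalso; omega) | (congr 1 <;> first | rfl | (rw [Fin.ext_iff]; simp only [Fin.val_mk]; omega))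
  -- putting it together
  have hperm : (N3.submatrix (finSumFinEquiv.trans (finCongr h2l))
      (fun x => Equiv.swap (⟨1, by omega⟩ : Fin (l + 2)) ⟨2, by omega⟩
        ((finSumFinEquiv.trans (finCongr h2l)) x))).det = -N3.det := by
    have e1 : N3.submatrix (finSumFinEquiv.trans (finCongr h2l))
        (fun x => Equiv.swap (⟨1, by omega⟩ : Fin (l + 2)) ⟨2, by omega⟩
          ((finSumFinEquiv.trans (finCongr h2l)) x))
        = (N3.submatrix id (Equiv.swap (⟨1, by omega⟩ : Fin (l + 2)) ⟨2, by omega⟩)).submatrix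
          (finSumFinEquiv.trans (finCongr h2l)) (finSumFinEquiv.trans (finCongr h2l)) := rfl
    rw [e1, Matrix.det_submatrix_equiv_self, Matrix.det_permute',
      Equiv.Perm.sign_swap (by simp [Fin.ext_iff] :
        (⟨1, by omega⟩ : Fin (l + 2)) ≠ ⟨2, by omega⟩)]
    push_cast
    ring
  have hdetF : ((1 : R) - u * v) * M₀.det = -N3.det := by
    have hd := congrArg Matrix.det hkey
    rw [Matrix.det_fromBlocks_zero₁₂, Matrix.det_fin_two_of] at hd
    have := hd.trans hperm
    rw [← this]
    ring
  rw [hdetN3, hdetN2, hdetN] at hdetF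
  linear_combination hdetF
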